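/- Let q ≥ 1 and n ≥ 1. The maximum of F(x) = Σ_{i=1}^n x_i^q over all x = (x_1,...,x_n) satisfying x_1 ≥ x_2 ≥ ... ≥ x_n ≥ 0 and Σ_{i=1}^n x_i/λ_i ≤ 1 is attained at a point of the form x_1 = x_2 = ... = x_k = 1/(Σ_{j=1}^k 1/λ_j) and x_{k+1} = ... = x_n = 0, for some k with 1 ≤ k ≤ n. -/

import Mathlib

open Finset

/-- Jensen for subconvex combinations: if weights sum to at most 1 and points are
nonnegative, `(∑ wₖ pₖ)^q ≤ ∑ wₖ pₖ^q` for `q ≥ 1`. -/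
lemma aux_jensen (q : ℝ) (hq : 1 ≤ q) (m : ℕ) (w p : ℕ → ℝ)
    (hw : ∀ k ∈ Finset.range m, 0 ≤ w k) (hw1 : ∑ k ∈ Finset.range m, w k ≤ 1)
    (hp : ∀ k ∈ Finset.range m, 0 ≤ p k) :
    (∑ k ∈ Finset.range m, w k * p k) ^ q ≤ ∑ k ∈ Finset.range m, w k * (p k) ^ q := by
  have hq0 : q ≠ 0 := by linarith
  set w' : ℕ → ℝ := fun k => if k = m then 1 - ∑ k ∈ Finset.range m, w k else w k with hw'
  set p' : ℕ → ℝ := fun k => if k = m then 0 else p k with hp'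
  have hmem : ∀ k ∈ Finset.range (m+1), p' k ∈ Set.Ici (0:ℝ) := by
    intro k hk
    simp only [hp']
    split
    · simp
    · exact hp k (Finset.mem_range.mpr (lt_of_le_of_ne (Nat.lt_succ_iff.mp (Finset.mem_range.mp hk)) (by assumption)))
  have h0 : ∀ k ∈ Finset.range (m+1), 0 ≤ w' k := by
    intro k hk
    simp only [hw']
    split
    · linarith
    · exact hw k (Finset.mem_range.mpr (lt_of_le_of_ne (Nat.lt_succ_iff.mp (Finset.mem_range.mp hk)) (by assumption)))
  have h1 : ∑ k ∈ Finset.range (m+1), w' k = 1 := by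
    rw [Finset.sum_range_succ]
    have : ∑ k ∈ Finset.range m, w' k = ∑ k ∈ Finset.range m, w k := by
      apply Finset.sum_congr rfl
      intro k hk
      simp only [hw']
      rw [if_neg (Nat.ne_of_lt (Finset.mem_range.mp hk))]
    rw [this]; simp [hw']
  have := (convexOn_rpow hq).map_sum_le h0 h1 hmem
  simp only [smul_eq_mul] at this
  have harg : ∑ k ∈ Finset.range (m+1), w' k * p' k = ∑ k ∈ Finset.range m, w k * p k := by
    rw [Finset.sum_range_succ]
    have : ∑ k ∈ Finset.range m, w' k * p' k = ∑ k ∈ Finset.range m, w k * p k := by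
      apply Finset.sum_congr rfl
      intro k hk
      have hne := Nat.ne_of_lt (Finset.mem_range.mp hk)
      simp [hw', hp', hne]
    rw [this]; simp [hp']
  have hrhs : ∑ k ∈ Finset.range (m+1), w' k * (p' k) ^ q = ∑ k ∈ Finset.range m, w k * (p k) ^ q := by
    rw [Finset.sum_range_succ]
    have : ∑ k ∈ Finset.range m, w' k * (p' k) ^ q = ∑ k ∈ Finset.range m, w k * (p k) ^ q := by
      apply Finset.sum_congr rfl
      intro k hk
      have hne := Nat.ne_of_lt (Finset.mem_range.mp hk)
      simp [hw', hp', hne]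
    rw [this]; simp [hp', Real.zero_rpow hq0]
  rw [harg, hrhs] at this
  exact this

/-- Abel summation identity. -/
lemma aux_abel (Λ : ℕ → ℝ) (g : ℕ → ℝ) (m : ℕ) :
    ∑ k ∈ Finset.range m, (g k - g (k+1)) * (∑ j ∈ Finset.range (k+1), 1/Λ j)
      = ∑ k ∈ Finset.range m, g k / Λ k - g m * ∑ j ∈ Finset.range m, 1/Λ j := by
  induction m with
  | zero => simp
  | succ m ih =>
      rw [Finset.sum_range_succ, ih, Finset.sum_range_succ (f := fun k => g k / Λ k),
        Finset.sum_range_succ (f := fun j => 1/Λ j)]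
      ring

/-- Sum of a step indicator. -/
lemma aux_filter (i n : ℕ) (g : ℕ → ℝ) :
    ∑ k ∈ Finset.range n, (if i ≤ k then g k else 0) = ∑ k ∈ Finset.Ico i n, g k := by
  rw [← Finset.sum_filter]
  congr 1
  ext k
  simp only [Finset.mem_filter, Finset.mem_range, Finset.mem_Ico]
  omega

theorem stmt0 (q : ℝ) (hq : 1 ≤ q) (n : ℕ) (hn : 1 ≤ n)
    (Λ : ℕ → ℝ) (hΛpos : ∀ i, 0 < Λ i) (hΛmono : Monotone Λ) :
    ∃ (x : Fin n → ℝ) (k : ℕ), 1 ≤ k ∧ k ≤ n ∧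
      (∀ i : Fin n, (i : ℕ) < k → x i = 1 / ∑ j ∈ Finset.range k, 1 / Λ j) ∧
      (∀ i : Fin n, k ≤ (i : ℕ) → x i = 0) ∧
      (∀ i : Fin n, 0 ≤ x i) ∧
      (∀ i j : Fin n, i ≤ j → x j ≤ x i) ∧
      (∑ i, x i / Λ (i : ℕ)) ≤ 1 ∧
      (∀ y : Fin n → ℝ,
        (∀ i, 0 ≤ y i) → (∀ i j : Fin n, i ≤ j → y j ≤ y i) →
        (∑ i, y i / Λ (i : ℕ)) ≤ 1 →
        (∑ i, (y i) ^ q) ≤ ∑ i, (x i) ^ q) := by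
  have hq0 : q ≠ 0 := by linarith
  set S : ℕ → ℝ := fun k => ∑ j ∈ Finset.range k, 1 / Λ j with hSdef
  have hSpos : ∀ k, 1 ≤ k → 0 < S k := by
    intro k hk
    exact Finset.sum_pos (fun j _ => div_pos one_pos (hΛpos j))
      (Finset.nonempty_range_iff.mpr (by omega))
  set c : ℕ → ℝ := fun k => 1 / S k with hcdef
  have hcpos : ∀ k, 1 ≤ k → 0 < c k := fun k hk => div_pos one_pos (hSpos k hk)
  set M : ℕ → ℝ := fun k => (k : ℝ) * (c k) ^ q with hMdef
  obtain ⟨K, hKmem, hKmax⟩ := Finset.exists_max_image (Finset.Icc 1 n) M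
    ⟨1, Finset.mem_Icc.mpr ⟨le_refl 1, hn⟩⟩
  obtain ⟨hK1, hKn⟩ := Finset.mem_Icc.mp hKmem
  have hcK : 0 < c K := hcpos K hK1
  have hSK : 0 < S K := hSpos K hK1
  refine ⟨fun i => if (i : ℕ) < K then c K else 0, K, hK1, hKn, ?_, ?_, ?_, ?_, ?_, ?_⟩
  · intro i hi
    show (if (i : ℕ) < K then c K else 0) = _
    rw [if_pos hi]
  · intro i hi; simp [Nat.not_lt.mpr hi]
  · intro i; dsimp only; split
    · exact le_of_lt hcK
    · exact le_refl 0
  · intro i j hij; dsimp only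
    by_cases hj : (j : ℕ) < K
    · rw [if_pos hj, if_pos (lt_of_le_of_lt (by exact_mod_cast hij) hj)]
    · rw [if_neg hj]; split
      · exact le_of_lt hcK
      · exact le_refl 0
  · -- constraint for x : equals 1
    have : ∑ i : Fin n, (if (i : ℕ) < K then c K else 0) / Λ (i : ℕ)
        = ∑ j ∈ Finset.range n, (if j < K then c K else 0) / Λ j :=
      Fin.sum_univ_eq_sum_range (fun j => (if j < K then c K else 0) / Λ j) n
    rw [this, ← Finset.sum_subset (Finset.range_subset_range.mpr hKn)
        (fun j _ hj => by rw [if_neg (fun h => hj (Finset.mem_range.mpr h))]; simp)]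
    have : ∑ j ∈ Finset.range K, (if j < K then c K else 0) / Λ j
        = c K * S K := by
      rw [hSdef, Finset.mul_sum]
      apply Finset.sum_congr rfl
      intro j hj
      rw [if_pos (Finset.mem_range.mp hj)]
      ring
    rw [this, hcdef]
    rw [one_div_mul_cancel (ne_of_gt hSK)]
  · -- the main bound
    intro y hy0 hymono hycon
    -- value of x
    have hxval : ∑ i : Fin n, (if (i : ℕ) < K then c K else 0) ^ q = M K := by
      have e1 : ∑ i : Fin n, (if (i : ℕ) < K then c K else 0) ^ q
          = ∑ j ∈ Finset.range n, (if j < K then c K else 0) ^ q :=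
        Fin.sum_univ_eq_sum_range (fun j => (if j < K then c K else 0) ^ q) n
      rw [e1, ← Finset.sum_subset (Finset.range_subset_range.mpr hKn)
          (fun j _ hj => by
            rw [if_neg (fun h => hj (Finset.mem_range.mpr h))]
            exact Real.zero_rpow hq0)]
      have : ∑ j ∈ Finset.range K, (if j < K then c K else 0) ^ q
          = ∑ j ∈ Finset.range K, (c K) ^ q :=
        Finset.sum_congr rfl fun j hj => by rw [if_pos (Finset.mem_range.mp hj)]
      rw [this, Finset.sum_const, Finset.card_range, nsmul_eq_mul, hMdef]
    rw [hxval]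
    -- extend y
    set y' : ℕ → ℝ := fun j => if h : j < n then y ⟨j, h⟩ else 0 with hy'def
    have hy'0 : ∀ j, 0 ≤ y' j := by
      intro j; simp only [hy'def]; split
      · exact hy0 _
      · exact le_refl 0
    have hy'anti : ∀ j, y' (j+1) ≤ y' j := by
      intro j; simp only [hy'def]
      split
      · rename_i h1
        have hj : j < n := by omega
        rw [dif_pos hj]
        exact hymono ⟨j, hj⟩ ⟨j+1, h1⟩ (by simp)
      · split
        · exact hy0 _
        · exact le_refl 0
    have hy'n : y' n = 0 := by simp [hy'def]
    set w : ℕ → ℝ := fun k => (y' k - y' (k+1)) * S (k+1) with hwdef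
    have hw0 : ∀ k ∈ Finset.range n, 0 ≤ w k := by
      intro k _
      exact mul_nonneg (by linarith [hy'anti k]) (le_of_lt (hSpos (k+1) (by omega)))
    have hwsum : ∑ k ∈ Finset.range n, w k = ∑ i : Fin n, y i / Λ (i : ℕ) := by
      have := aux_abel Λ y' n
      rw [hy'n] at this
      simp only [zero_mul, sub_zero] at this
      rw [hwdef]
      simp only [hSdef]
      rw [this]
      rw [← Fin.sum_univ_eq_sum_range (fun j => y' j / Λ j) n]
      apply Finset.sum_congr rfl
      intro i _
      have hyi : y' (i : ℕ) = y i := by rw [hy'def]; simp [i.isLt]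
      rw [hyi]
    have hwle1 : ∑ k ∈ Finset.range n, w k ≤ 1 := by rw [hwsum]; exact hycon
    -- coordinate decomposition
    set p : ℕ → ℕ → ℝ := fun k i => if i ≤ k then c (k+1) else 0 with hpdef
    have hdecomp : ∀ i : Fin n, y i = ∑ k ∈ Finset.range n, w k * p k (i : ℕ) := by
      intro i
      have e1 : ∀ k, w k * p k (i : ℕ)
          = if (i : ℕ) ≤ k then y' k - y' (k+1) else 0 := by
        intro k
        rw [hwdef, hpdef]
        dsimp only
        split
        · rw [mul_assoc, hcdef]
          rw [mul_one_div_cancel (ne_of_gt (hSpos (k+1) (by omega))), mul_one]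
        · rw [mul_zero]
      simp only [e1]
      rw [aux_filter (i : ℕ) n (fun k => y' k - y' (k+1))]
      rw [Finset.sum_Ico_eq_sub _ (le_of_lt i.isLt)]
      rw [Finset.sum_range_sub' y' n, Finset.sum_range_sub' y' (i : ℕ)]
      rw [hy'n]
      have : y' (i : ℕ) = y i := by rw [hy'def]; simp [i.isLt]
      rw [← this]; ring
    -- Jensen per coordinate
    have hjensen : ∀ i : Fin n,
        (y i) ^ q ≤ ∑ k ∈ Finset.range n, w k * (p k (i : ℕ)) ^ q := by
      intro i
      rw [hdecomp i]
      exact aux_jensen q hq n w (fun k => p k (i : ℕ)) hw0 hwle1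
        (fun k _ => by
          rw [hpdef]; dsimp only; split
          · exact le_of_lt (hcpos (k+1) (by omega))
          · exact le_refl 0)
    have step1 : ∑ i : Fin n, (y i) ^ q
        ≤ ∑ i : Fin n, ∑ k ∈ Finset.range n, w k * (p k (i : ℕ)) ^ q :=
      Finset.sum_le_sum fun i _ => hjensen i
    -- swap sums and compute inner sums
    have hinner : ∀ k ∈ Finset.range n,
        ∑ i : Fin n, (p k (i : ℕ)) ^ q = ((k : ℝ) + 1) * (c (k+1)) ^ q := by
      intro k hk
      have hkn : k + 1 ≤ n := Finset.mem_range.mp hk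
      have e1 : ∑ i : Fin n, (p k (i : ℕ)) ^ q
          = ∑ j ∈ Finset.range n, (p k j) ^ q :=
        Fin.sum_univ_eq_sum_range (fun j => (p k j) ^ q) n
      rw [e1, ← Finset.sum_subset (Finset.range_subset_range.mpr hkn)
          (fun j _ hj => by
            rw [hpdef]; dsimp only
            rw [if_neg (show ¬ j ≤ k by intro h; exact hj (Finset.mem_range.mpr (by omega)))]
            exact Real.zero_rpow hq0)]
      have : ∑ j ∈ Finset.range (k+1), (p k j) ^ q
          = ∑ j ∈ Finset.range (k+1), (c (k+1)) ^ q := by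
        apply Finset.sum_congr rfl
        intro j hj
        rw [hpdef]; dsimp only
        rw [if_pos (Nat.lt_succ_iff.mp (Finset.mem_range.mp hj))]
      rw [this, Finset.sum_const, Finset.card_range, nsmul_eq_mul]
      push_cast
      ring
    have step2 : ∑ i : Fin n, ∑ k ∈ Finset.range n, w k * (p k (i : ℕ)) ^ q
        = ∑ k ∈ Finset.range n, w k * (((k : ℝ) + 1) * (c (k+1)) ^ q) := by
      rw [Finset.sum_comm]
      apply Finset.sum_congr rfl
      intro k hk
      rw [← Finset.mul_sum, hinner k hk]
    have hMK_nonneg : 0 ≤ M K := by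
      rw [hMdef]
      exact mul_nonneg (Nat.cast_nonneg K) (Real.rpow_nonneg (le_of_lt hcK) q)
    have step3 : ∑ k ∈ Finset.range n, w k * (((k : ℝ) + 1) * (c (k+1)) ^ q) ≤ M K := by
      have hbound : ∀ k ∈ Finset.range n,
          w k * (((k : ℝ) + 1) * (c (k+1)) ^ q) ≤ w k * M K := by
        intro k hk
        apply mul_le_mul_of_nonneg_left _ (hw0 k hk)
        have := hKmax (k+1) (Finset.mem_Icc.mpr ⟨by omega, Finset.mem_range.mp hk⟩)
        rw [hMdef] at this ⊢
        push_cast at this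
        exact this
      calc ∑ k ∈ Finset.range n, w k * (((k : ℝ) + 1) * (c (k+1)) ^ q)
          ≤ ∑ k ∈ Finset.range n, w k * M K := Finset.sum_le_sum hbound
        _ = (∑ k ∈ Finset.range n, w k) * M K := by rw [Finset.sum_mul]
        _ ≤ 1 * M K := mul_le_mul_of_nonneg_right hwle1 hMK_nonneg
        _ = M K := one_mul _
    calc ∑ i : Fin n, (y i) ^ q
        ≤ ∑ i : Fin n, ∑ k ∈ Finset.range n, w k * (p k (i : ℕ)) ^ q := step1
      _ = ∑ k ∈ Finset.range n, w k * (((k : ℝ) + 1) * (c (k+1)) ^ q) := step2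
      _ ≤ M K := step3
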